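/- Let X be a topological space and ω : S¹ → X a free loop. Then the image of the trace homomorphism t : π₁(ΩX, ω) → π₁(X, ω(1)) is exactly the centralizer of [ω] in π₁(X, ω(1)); in particular t is surjective onto Z([ω]). -/

import Mathlib

open CategoryTheory
open scoped FundamentalGroupoid

noncomputable section

attribute [local instance] Path.Homotopic.setoid

/-- The free loop space of `X`: continuous maps `S¹ → X` with the compact-open topology. -/
abbrev FreeLoopSpace (X : Type*) [TopologicalSpace X] := C(Circle, X)

/-- Evaluation of a free loop at the basepoint `1 ∈ S¹`. -/
def evalAtOne (X : Type*) [TopologicalSpace X] : C(FreeLoopSpace X, X) :=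
  ⟨fun ω => ω 1, continuous_eval_const 1⟩

universe u

/-- The homomorphism of fundamental groups induced by a continuous map. -/
def inducedHom {X Y : Type u} [TopologicalSpace X] [TopologicalSpace Y] (f : C(X, Y)) (x : X) :
    Aut (FundamentalGroupoid.mk x) →* Aut (FundamentalGroupoid.mk (f x)) :=
  CategoryTheory.Functor.mapAut (FundamentalGroupoid.mk x)
    (show FundamentalGroupoid X ⥤ FundamentalGroupoid Y from
      πₘ (show TopCat.of X ⟶ TopCat.of Y from TopCat.ofHom f))

/-- A free loop `ω : S¹ → X`, reparametrized as a path from `ω 1` to itself. -/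
def loopPath {X : Type*} [TopologicalSpace X] (ω : FreeLoopSpace X) : Path (ω 1) (ω 1) where
  toFun t := ω (Circle.exp (2 * Real.pi * (t : ℝ)))
  continuous_toFun := ω.continuous.comp (Circle.exp.continuous.comp (by continuity))
  source' := by simp
  target' := by simp

/-- The class `[ω] ∈ π₁(X, ω(1))` of a free loop `ω`. -/
def loopClass {X : Type*} [TopologicalSpace X] (ω : FreeLoopSpace X) :
    Aut (FundamentalGroupoid.mk (ω 1)) :=
  (CategoryTheory.Groupoid.isoEquivHom
      (FundamentalGroupoid.mk (ω 1)) (FundamentalGroupoid.mk (ω 1))).symm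
    (⟦loopPath ω⟧ : Path.Homotopic.Quotient (ω 1) (ω 1))

namespace TraceAux

universe v
variable {Y : Type v} [TopologicalSpace Y]

/-- A loop as a morphism in the fundamental groupoid. -/
def pclass {x : Y} (p : Path x x) :
    FundamentalGroupoid.mk x ⟶ FundamentalGroupoid.mk x := ⟦p⟧

def circPath : Path (1 : Circle) 1 where
  toFun t := Circle.exp (2 * Real.pi * (t : ℝ))
  continuous_toFun := Circle.exp.continuous.comp (by continuity)
  source' := by simp
  target' := by simp

def tracePath (ω : FreeLoopSpace Y) (α : Path ω ω) : Path (ω 1) (ω 1) where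
  toFun s := α s 1
  continuous_toFun := (continuous_eval_const (1 : Circle)).comp α.continuous
  source' := by simp
  target' := by simp

def downMap : C(ULift.{v} Circle, Circle) := ⟨ULift.down, continuous_uliftDown⟩

def ucircPath : Path (ULift.up.{v} (1 : Circle)) (ULift.up 1) := circPath.map continuous_uliftUp

def loopHomotopy (ω : FreeLoopSpace Y) (α : Path ω ω) :
    ContinuousMap.Homotopy (ω.comp downMap) (ω.comp downMap) where
  toContinuousMap := ⟨fun p => α p.1 p.2.down,
    continuous_eval.comp ((α.continuous.comp continuous_fst).prodMk
      (continuous_uliftDown.comp continuous_snd))⟩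
  map_zero_left := fun c => by simp [downMap]
  map_one_left := fun c => by simp [downMap]

lemma comm_aux (ω : FreeLoopSpace Y) (α : Path ω ω) :
    pclass (loopPath ω) ≫ pclass (tracePath ω α)
      = pclass (tracePath ω α) ≫ pclass (loopPath ω) := by
  let H := loopHomotopy ω α
  have key := ContinuousMap.Homotopy.eq_diag_path (X := TopCat.of (ULift.{v} Circle))
    (Y := TopCat.of Y) (f := ω.comp downMap) (g := ω.comp downMap) H
    (⟦ucircPath⟧ : FundamentalGroupoid.fromTop (X := TopCat.of (ULift.{v} Circle)) (ULift.up 1) ⟶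
      FundamentalGroupoid.fromTop (ULift.up 1))
  have key2 := key.1.trans key.2.symm
  have h1 : (πₘ (show TopCat.of (ULift.{v} Circle) ⟶ TopCat.of Y from TopCat.ofHom (ω.comp downMap))).map
      (⟦ucircPath⟧ : FundamentalGroupoid.fromTop (X := TopCat.of (ULift.{v} Circle)) (ULift.up 1) ⟶
        FundamentalGroupoid.fromTop (ULift.up 1))
      = pclass (loopPath ω) := by
    rfl
  rw [h1] at key2
  have h2 : (⟦H.evalAt (ULift.up.{v} (1 : Circle))⟧ : FundamentalGroupoid.fromTop (X := TopCat.of Y)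
          ((ω.comp downMap) (ULift.up.{v} (1 : Circle))) ⟶
        FundamentalGroupoid.fromTop ((ω.comp downMap) (ULift.up.{v} (1 : Circle))))
      = pclass (tracePath ω α) := by
    unfold pclass
    congr 1
  rw [← h2]
  exact key2

end TraceAux

namespace Conv

universe w
variable {Y : Type w} [TopologicalSpace Y]

open unitInterval

lemma psi_mem (s t : I) : (1 - (s:ℝ))/4 + (t:ℝ) * (1 + 3*(s:ℝ))/4 ∈ I := by
  constructor
  · have := s.2.1; have := s.2.2; have := t.2.1; have := t.2.2
    nlinarith
  · have := s.2.1; have := s.2.2; have := t.2.1; have := t.2.2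
    nlinarith

def psi (s t : I) : I := ⟨(1 - (s:ℝ))/4 + (t:ℝ) * (1 + 3*(s:ℝ))/4, psi_mem s t⟩

def TP {x : Y} (γ ω' : Path x x) : Path x x := (γ.symm.trans ω').trans γ

lemma TP_psi_zero {x : Y} (γ ω' : Path x x) (t : I) : TP γ ω' (psi 0 t) = ω' t := by
  have hc : ((psi 0 t : I) : ℝ) = 1/4 + (t:ℝ)/4 := by simp [psi]
  have ht0 := t.2.1
  have ht1 := t.2.2
  rw [TP, Path.trans_apply]
  split_ifs with h
  · rw [Path.trans_apply]
    split_ifs with h2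
    · -- t = 0 forced
      have ht : (t:ℝ) = 0 := by
        simp only [hc] at h2
        push_cast at h2
        linarith
      have htI : t = 0 := Subtype.ext ht
      have key : ∀ u : I, (u:ℝ) = 1 → γ.symm u = ω' t := by
        intro u hu
        have hu1 : u = 1 := Subtype.ext hu
        rw [hu1, Path.target, htI, Path.source]
      apply key
      show 2 * (2 * ((psi 0 t : I):ℝ)) = 1
      rw [hc, ht]
      ring
    · have harg : ∀ (hh : 2 * (2 * ((psi 0 t : I) : ℝ)) - 1 ∈ I),
          ω' ⟨2 * (2 * ((psi 0 t : I):ℝ)) - 1, hh⟩ = ω' t := by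
        intro hh
        congr 1
        apply Subtype.ext
        show 2 * (2 * ((psi 0 t : I):ℝ)) - 1 = (t:ℝ)
        rw [hc]; ring
      exact harg _
  · exfalso
    apply h
    rw [hc]
    show (1:ℝ)/4 + (t:ℝ)/4 ≤ 1/2
    linarith

lemma psi_one (t : I) : psi 1 t = t := by
  apply Subtype.ext
  simp [psi]
  ring

lemma TP_psi_left {x : Y} (γ ω' : Path x x) (s : I) : TP γ ω' (psi s 0) = γ s := by
  have hs0 := s.2.1; have hs1 := s.2.2
  have hc : ((psi s 0 : I):ℝ) = (1-(s:ℝ))/4 := by simp [psi]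
  rw [TP, Path.trans_apply]
  split_ifs with h
  · rw [Path.trans_apply]
    split_ifs with h2
    · have key : ∀ u : I, (u:ℝ) = 1 - (s:ℝ) → γ.symm u = γ s := by
        intro u hu
        have hus : unitInterval.symm u = s := Subtype.ext (by rw [unitInterval.coe_symm_eq, hu]; ring)
        calc γ.symm u = γ (unitInterval.symm u) := rfl
        _ = γ s := by rw [hus]
      apply key
      show 2 * (2 * ((psi s 0 : I):ℝ)) = 1 - (s:ℝ)
      rw [hc]; ring
    · exfalso
      apply h2
      show 2 * ((psi s 0 : I):ℝ) ≤ 1/2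
      rw [hc]; linarith
  · exfalso
    apply h
    show ((psi s 0 : I):ℝ) ≤ 1/2
    rw [hc]; linarith

lemma TP_psi_right {x : Y} (γ ω' : Path x x) (s : I) : TP γ ω' (psi s 1) = γ s := by
  have hs0 := s.2.1; have hs1 := s.2.2
  have hc : ((psi s 1 : I):ℝ) = (1+(s:ℝ))/2 := by simp [psi]; ring
  rw [TP, Path.trans_apply]
  split_ifs with h
  · have hss : (s:ℝ) = 0 := by rw [hc] at h; linarith
    have hsI : s = 0 := Subtype.ext hss
    rw [Path.trans_apply]
    split_ifs with h2
    · exfalso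
      have : 2 * ((psi s 1 : I):ℝ) ≤ 1/2 := h2
      rw [hc] at this; linarith
    · have key : ∀ u : I, (u:ℝ) = 1 → ω' u = γ s := by
        intro u hu
        have hu1 : u = 1 := Subtype.ext hu
        rw [hu1, Path.target, hsI, Path.source]
      apply key
      show 2 * (2 * ((psi s 1 : I):ℝ)) - 1 = 1
      rw [hc, hss]; ring
  · have key : ∀ u : I, (u:ℝ) = (s:ℝ) → γ u = γ s := by
      intro u hu
      rw [Subtype.ext hu]
    apply key
    show 2 * ((psi s 1 : I):ℝ) - 1 = (s:ℝ)
    rw [hc]; ring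

def Wmap {x : Y} (γ ω' : Path x x) :
    ContinuousMap.Homotopy ω'.toContinuousMap (TP γ ω').toContinuousMap where
  toContinuousMap :=
    ⟨fun p => TP γ ω' (psi p.1 p.2), by
      apply (TP γ ω').continuous.comp
      apply Continuous.subtype_mk
      fun_prop⟩
  map_zero_left t := TP_psi_zero γ ω' t
  map_one_left t := by
    show TP γ ω' (psi 1 t) = (TP γ ω') t
    rw [psi_one]

lemma total_boundary {x : Y} (γ ω' : Path x x) (h : Path.Homotopy (TP γ ω') ω')
    (s t : I) (ht : t = 0 ∨ t = 1) :
    ((Wmap γ ω').trans h.toHomotopy) (s, t) = (γ.trans (Path.refl x)) s := by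
  rw [ContinuousMap.Homotopy.trans_apply, Path.trans_apply]
  split_ifs with hh
  · show TP γ ω' (psi _ t) = _
    rcases ht with rfl | rfl
    · exact TP_psi_left γ ω' _
    · exact TP_psi_right γ ω' _
  · have hmem : t ∈ ({0, 1} : Set unitInterval) := by
      rcases ht with rfl | rfl
      · exact Set.mem_insert _ _
      · exact Set.mem_insert_of_mem _ rfl
    calc h.toHomotopy (_, t) = (TP γ ω') t := h.eq_fst _ hmem
      _ = x := by rcases ht with rfl | rfl
                  · exact Path.source _
                  · exact Path.target _
      _ = _ := by rw [Path.refl_apply]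

lemma qsurj (c : Circle) : ∃ t : unitInterval, Circle.exp (2 * Real.pi * (t : ℝ)) = c := by
  have hpi := Real.pi_pos
  have h1 := Complex.arg_le_pi (c : ℂ)
  have h2 := Complex.neg_pi_lt_arg (c : ℂ)
  rcases le_or_gt 0 (Complex.arg (c : ℂ)) with h | h
  · refine ⟨⟨Complex.arg (c : ℂ) / (2 * Real.pi), by positivity, ?_⟩, ?_⟩
    · rw [div_le_one (by positivity)]; linarith
    · rw [show 2 * Real.pi * (Complex.arg (c:ℂ) / (2 * Real.pi)) = Complex.arg (c:ℂ) by
        field_simp]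
      exact Circle.exp_arg c
  · refine ⟨⟨(Complex.arg (c : ℂ) + 2 * Real.pi) / (2 * Real.pi),
        div_nonneg (by linarith) (by positivity), ?_⟩, ?_⟩
    · rw [div_le_one (by positivity)]; linarith
    · rw [show 2 * Real.pi * ((Complex.arg (c:ℂ) + 2 * Real.pi) / (2 * Real.pi))
          = Complex.arg (c:ℂ) + 2 * Real.pi by field_simp]
      rw [Circle.periodic_exp _]
      exact Circle.exp_arg c

lemma glue {Z : Type*} (f : unitInterval → Z) (hf : f 0 = f 1) (t t' : unitInterval)
    (h : Circle.exp (2 * Real.pi * (t : ℝ)) = Circle.exp (2 * Real.pi * (t' : ℝ))) :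
    f t = f t' := by
  have hpi := Real.pi_pos
  rw [Circle.exp_eq_exp] at h
  obtain ⟨m, hm⟩ := h
  have hmr : (t : ℝ) = (t' : ℝ) + m := by
    have h2 : (2 * Real.pi) * (t : ℝ) = (2 * Real.pi) * ((t' : ℝ) + m) := by
      rw [hm]; ring
    have := mul_left_cancel₀ (by positivity : (2 * Real.pi) ≠ 0) h2
    linarith [this]
  have ht0 := t.2.1; have ht1 := t.2.2; have ht0' := t'.2.1; have ht1' := t'.2.2
  have hm1 : m = 0 ∨ m = 1 ∨ m = -1 := by
    have hmle : (m : ℝ) ≤ 1 := by linarith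
    have hmge : (-1 : ℝ) ≤ m := by linarith
    have : m ≤ 1 := by exact_mod_cast hmle
    have : -1 ≤ m := by exact_mod_cast hmge
    omega
  rcases hm1 with rfl | rfl | rfl
  · have : t = t' := Subtype.ext (by push_cast at hmr; linarith)
    rw [this]
  · have h1 : t = 1 := Set.Icc.coe_eq_one.mp (by push_cast at hmr; linarith)
    have h0 : t' = 0 := Set.Icc.coe_eq_zero.mp (by push_cast at hmr; linarith)
    rw [h1, h0, hf]
  · have h0 : t = 0 := Set.Icc.coe_eq_zero.mp (by push_cast at hmr; linarith)
    have h1 : t' = 1 := Set.Icc.coe_eq_one.mp (by push_cast at hmr; linarith)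
    rw [h1, h0, hf]

open TraceAux in
lemma exists_loop (ω : FreeLoopSpace Y) (γ : Path (ω 1) (ω 1))
    (hcomm : pclass γ ≫ pclass (loopPath ω) = pclass (loopPath ω) ≫ pclass γ) :
    ∃ α : Path ω ω, tracePath ω α = γ.trans (Path.refl (ω 1)) := by
  classical
  set ω' := loopPath ω with hw
  have hTP : pclass (TP γ ω') = pclass ω' := by
    have h1 : pclass (TP γ ω') = (Groupoid.inv (pclass γ) ≫ pclass ω') ≫ pclass γ := rfl
    rw [h1, Category.assoc, ← hcomm, ← Category.assoc, Groupoid.inv_comp, Category.id_comp]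
  have hom : Path.Homotopic (TP γ ω') ω' :=
    Quotient.exact (show (⟦TP γ ω'⟧ : Path.Homotopic.Quotient (ω 1) (ω 1)) = ⟦ω'⟧ from hTP)
  let h : Path.Homotopy (TP γ ω') ω' := hom.some
  let total := (Wmap γ ω').trans h.toHomotopy
  have hbound : ∀ s (t : I), t = 0 ∨ t = 1 → total (s, t) = (γ.trans (Path.refl (ω 1))) s :=
    fun s t ht => total_boundary γ ω' h s t ht
  let pre : Circle → unitInterval := fun c => (qsurj c).choose
  have hpre : ∀ c, Circle.exp (2 * Real.pi * ((pre c) : ℝ)) = c := fun c => (qsurj c).choose_spec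
  let Q : I × I → I × Circle := fun p => (p.1, Circle.exp (2 * Real.pi * (p.2 : ℝ)))
  have hQcont : Continuous Q := by
    apply continuous_fst.prodMk
    exact Circle.exp.continuous.comp (by continuity)
  have hQsurj : Function.Surjective Q := by
    rintro ⟨s, c⟩
    obtain ⟨t, ht⟩ := qsurj c
    exact ⟨(s, t), by simp only [Q, ht]⟩
  have hQ : Topology.IsQuotientMap Q :=
    Topology.IsQuotientMap.of_surjective_continuous hQsurj hQcont
  let Ffun : I × Circle → Y := fun p => total (p.1, pre p.2)
  have hFQ : Ffun ∘ Q = fun p : I × I => total p := by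
    funext p
    show total (p.1, pre (Circle.exp (2 * Real.pi * (p.2 : ℝ)))) = total (p.1, p.2)
    exact glue (fun u => total (p.1, u))
      ((hbound p.1 0 (Or.inl rfl)).trans (hbound p.1 1 (Or.inr rfl)).symm) _ _ (by rw [hpre])
  have hFcont : Continuous Ffun := by
    rw [hQ.continuous_iff, hFQ]
    exact total.continuous
  let F : C(I × Circle, Y) := ⟨Ffun, hFcont⟩
  have hF0 : ∀ c, F (0, c) = ω c := by
    intro c
    show total (0, pre c) = ω c
    rw [total.apply_zero]
    show ω (Circle.exp (2 * Real.pi * ((pre c) : ℝ))) = ω c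
    rw [hpre]
  have hF1 : ∀ c, F (1, c) = ω c := by
    intro c
    show total (1, pre c) = ω c
    rw [total.apply_one]
    show ω (Circle.exp (2 * Real.pi * ((pre c) : ℝ))) = ω c
    rw [hpre]
  refine ⟨{ toFun := fun s => (ContinuousMap.curry F) s
            continuous_toFun := (ContinuousMap.curry F).continuous
            source' := ContinuousMap.ext fun c => hF0 c
            target' := ContinuousMap.ext fun c => hF1 c }, ?_⟩
  ext s
  show F (s, 1) = (γ.trans (Path.refl (ω 1))) s
  have h01 : total (s, pre 1) = total (s, 0) := by
    apply glue (fun u => total (s, u))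
      ((hbound s 0 (Or.inl rfl)).trans (hbound s 1 (Or.inr rfl)).symm)
    rw [hpre]
    norm_num
  show total (s, pre 1) = _
  rw [h01, hbound s 0 (Or.inl rfl)]

end Conv

/-- The image of the trace homomorphism `t : π₁(ΩX, ω) → π₁(X, ω(1))`, induced by evaluation
of free loops at the basepoint, is exactly the centralizer of `[ω]` in `π₁(X, ω(1))`;
in particular `t` is surjective onto `Z([ω])`. -/
theorem trace_hom_range_eq_centralizer
    (X : Type*) [TopologicalSpace X] (ω : FreeLoopSpace X) :
    (inducedHom (evalAtOne X) ω).range = Subgroup.centralizer {loopClass ω} := by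
  apply le_antisymm
  · rintro g ⟨b, rfl⟩
    refine Subgroup.mem_centralizer_iff.mpr ?_
    intro h hh
    replace hh : h = loopClass ω := hh
    subst hh
    obtain ⟨α, hα⟩ := Quotient.exists_rep (Iso.hom b)
    apply Iso.ext
    show (πₘ (show TopCat.of (FreeLoopSpace X) ⟶ TopCat.of X from TopCat.ofHom (evalAtOne X))).map (Iso.hom b)
          ≫ TraceAux.pclass (loopPath ω)
        = TraceAux.pclass (loopPath ω)
          ≫ (πₘ (show TopCat.of (FreeLoopSpace X) ⟶ TopCat.of X from TopCat.ofHom (evalAtOne X))).map (Iso.hom b)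
    rw [← hα]
    have hmap : (πₘ (show TopCat.of (FreeLoopSpace X) ⟶ TopCat.of X from TopCat.ofHom (evalAtOne X))).map
        (⟦α⟧ : Path.Homotopic.Quotient ω ω) = TraceAux.pclass (TraceAux.tracePath ω α) := by
      rfl
    rw [hmap]
    exact (TraceAux.comm_aux ω α).symm
  · intro g hg
    have hcomm' := Subgroup.mem_centralizer_iff.mp hg (loopClass ω) rfl
    have hcommh := congrArg Iso.hom hcomm'
    obtain ⟨γ, hγ⟩ := Quotient.exists_rep (Iso.hom g)
    have hpg : TraceAux.pclass γ = Iso.hom g := hγ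
    have hcomm : TraceAux.pclass γ ≫ TraceAux.pclass (loopPath ω) = TraceAux.pclass (loopPath ω) ≫ TraceAux.pclass γ := by
      rw [hpg]
      exact hcommh.trans (congrArg (fun x => TraceAux.pclass (loopPath ω) ≫ x) hpg.symm)
    obtain ⟨α, hα⟩ := Conv.exists_loop ω γ hcomm
    refine ⟨(CategoryTheory.Groupoid.isoEquivHom
        (FundamentalGroupoid.mk ω) (FundamentalGroupoid.mk ω)).symm
        (⟦α⟧ : Path.Homotopic.Quotient ω ω), ?_⟩
    apply Iso.ext
    show (πₘ (show TopCat.of (FreeLoopSpace X) ⟶ TopCat.of X from TopCat.ofHom (evalAtOne X))).map ⟦α⟧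
        = Iso.hom g
    calc (show FundamentalGroupoid.mk (ω 1) ⟶ FundamentalGroupoid.mk (ω 1) from
          (πₘ (show TopCat.of (FreeLoopSpace X) ⟶ TopCat.of X from TopCat.ofHom (evalAtOne X))).map ⟦α⟧)
        = TraceAux.pclass (TraceAux.tracePath ω α) := by
          rfl
      _ = (show FundamentalGroupoid.mk (ω 1) ⟶ FundamentalGroupoid.mk (ω 1) from TraceAux.pclass (γ.trans (Path.refl (ω 1)))) := congrArg TraceAux.pclass hα
      _ = (show FundamentalGroupoid.mk (ω 1) ⟶ FundamentalGroupoid.mk (ω 1) from TraceAux.pclass γ) := Quotient.sound ⟨Path.Homotopy.transRefl γ⟩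
      _ = (show FundamentalGroupoid.mk (ω 1) ⟶ FundamentalGroupoid.mk (ω 1) from Iso.hom g) := hpg
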